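/- Let s ≥ 3 and suppose there exists at least one K_{s+1}-free finite simple graph H with H → (s, s)^v. Then there exists a K_{s+1}-free finite simple graph G with minimum degree δ(G) = 2s−2 such that G → (s, s)^v and, for every vertex u of G, (G − u) does not satisfy (G − u) → (s, s)^v. -/

import Mathlib

/-- `G → (a₁,…,a_r)ᵛ`: for every coloring of the vertices of `G` with `r` colors,
there is a color `i` and a clique of `G` on `a i` vertices all of whose vertices
receive color `i`. -/
def VArrows {V : Type*} {r : ℕ} (G : SimpleGraph V) (a : Fin r → ℕ) : Prop :=
  ∀ c : V → Fin r, ∃ i : Fin r, ∃ t : Finset V,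
    G.IsNClique (a i) t ∧ ∀ v ∈ t, c v = i

open scoped Classical

namespace Stmt12

open Finset

/-- two-coloring arrowing of `(s,s)` -/
def Arr (s : ℕ) {V : Type*} (G : SimpleGraph V) : Prop :=
  ∀ c : V → Fin 2, ∃ (col : Fin 2) (t : Finset V),
    G.IsNClique s t ∧ ∀ v ∈ t, c v = col

lemma vec_ss (s : ℕ) : (![s, s] : Fin 2 → ℕ) = fun _ => s := by
  funext i; fin_cases i <;> rfl

lemma arr_iff {V : Type*} (s : ℕ) (G : SimpleGraph V) :
    Arr s G ↔ VArrows G ![s, s] := by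
  unfold Arr VArrows
  rw [vec_ss]

lemma not_arr_iff {V : Type*} (s : ℕ) (G : SimpleGraph V) :
    ¬ Arr s G ↔ ∃ c : V → Fin 2, ∀ (col : Fin 2) (t : Finset V),
      G.IsNClique s t → ∃ v ∈ t, c v ≠ col := by
  unfold Arr
  push_neg
  rfl

def flip2 : Fin 2 → Fin 2 := fun c => if c = 0 then 1 else 0

lemma flip2_flip2 (c : Fin 2) : flip2 (flip2 c) = c := by fin_cases c <;> rfl
lemma fin2_eq_or (c : Fin 2) : c = 0 ∨ c = 1 := by omega
lemma eq_flip2_of_ne {a b : Fin 2} (h : a ≠ b) : a = flip2 b := by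
  fin_cases a <;> fin_cases b <;> simp_all [flip2]

lemma isNClique_image {V W : Type*} [DecidableEq W] {G : SimpleGraph V} {G' : SimpleGraph W}
    (f : V → W) (hf : Function.Injective f)
    (hadj : ∀ a b, G.Adj a b → G'.Adj (f a) (f b))
    {n : ℕ} {T : Finset V} (hT : G.IsNClique n T) :
    G'.IsNClique n (T.image f) := by
  constructor
  · intro x hx y hy hxy
    simp only [coe_image, Set.mem_image, mem_coe] at hx hy
    obtain ⟨a, ha, rfl⟩ := hx
    obtain ⟨b, hb, rfl⟩ := hy
    exact hadj a b (hT.1 ha hb (fun h => hxy (by rw [h])))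
  · rw [Finset.card_image_of_injective _ hf, hT.2]

lemma arr_push {V W : Type*} {G : SimpleGraph V} {G' : SimpleGraph W} (s : ℕ)
    (f : V → W) (hf : Function.Injective f)
    (hadj : ∀ a b, G.Adj a b → G'.Adj (f a) (f b))
    (h : Arr s G) : Arr s G' := by
  intro c
  obtain ⟨col, t, ht, hmono⟩ := h (c ∘ f)
  exact ⟨col, t.image f, isNClique_image f hf hadj ht,
    fun v hv => by obtain ⟨a, ha, rfl⟩ := Finset.mem_image.mp hv; exact hmono a ha⟩

lemma cliquefree_pull {V W : Type*} {G : SimpleGraph V} {G' : SimpleGraph W} (n : ℕ)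
    (f : V → W) (hf : Function.Injective f)
    (hadj : ∀ a b, G.Adj a b → G'.Adj (f a) (f b))
    (h : G'.CliqueFree n) : G.CliqueFree n := by
  intro t ht
  exact h (t.image f) (isNClique_image f hf hadj ht)

lemma clique_subtype {V : Type*} {G : SimpleGraph V} {S : Set V} {T : Finset V} {n : ℕ}
    (hT : G.IsNClique n T) (hsub : ∀ x ∈ T, x ∈ S) :
    ∃ t : Finset S, (G.induce S).IsNClique n t ∧ ∀ y : S, y ∈ t → y.val ∈ T := by
  refine ⟨T.subtype (· ∈ S), ⟨?_, ?_⟩, ?_⟩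
  · intro a ha b hb hne
    have haT : a.val ∈ T := Finset.mem_subtype.mp (Finset.mem_coe.mp ha)
    have hbT : b.val ∈ T := Finset.mem_subtype.mp (Finset.mem_coe.mp hb)
    exact hT.1 (Finset.mem_coe.mpr haT) (Finset.mem_coe.mpr hbT)
      (fun h => hne (Subtype.ext h))
  · have hmap := Finset.subtype_map_of_mem (p := (· ∈ S)) hsub
    calc (T.subtype (· ∈ S)).card
        = ((T.subtype (· ∈ S)).map (Function.Embedding.subtype _)).card :=
          (Finset.card_map _).symm
      _ = T.card := by rw [hmap]
      _ = n := hT.2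
  · intro y hy
    exact Finset.mem_subtype.mp hy

lemma exists_minimal_finset {α : Type*} [DecidableEq α] (P : Finset α → Prop) :
    ∀ (n : ℕ) (M₀ : Finset α), M₀.card ≤ n → P M₀ →
      ∃ M, M ⊆ M₀ ∧ P M ∧ ∀ z ∈ M, ¬ P (M.erase z) := by
  intro n
  induction n with
  | zero =>
    intro M₀ hc hP
    have hM₀ : M₀ = ∅ := Finset.card_eq_zero.mp (Nat.le_zero.mp hc)
    refine ⟨M₀, Finset.Subset.refl _, hP, ?_⟩
    intro z hz
    rw [hM₀] at hz
    exact absurd hz (Finset.notMem_empty z)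
  | succ n ih =>
    intro M₀ hc hP
    by_cases h : ∃ z ∈ M₀, P (M₀.erase z)
    · obtain ⟨z, hz, hPz⟩ := h
      obtain ⟨M, hsub, hPM, hmin⟩ := ih (M₀.erase z)
        (by rw [Finset.card_erase_of_mem hz]; omega) hPz
      exact ⟨M, hsub.trans (Finset.erase_subset _ _), hPM, hmin⟩
    · push_neg at h
      exact ⟨M₀, Finset.Subset.refl _, hP, h⟩

lemma card_ne (m : ℕ) (v : Fin m) : Fintype.card {x : Fin m // x ≠ v} = m - 1 := by
  simp [Fintype.card_subtype_compl, Fintype.card_subtype_eq]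

/-- extraction of a vertex-critical arrowing induced subgraph -/
lemma exists_critical (s : ℕ) :
    ∀ (m : ℕ) (G : SimpleGraph (Fin m)), G.CliqueFree (s+1) → Arr s G →
    ∃ (m' : ℕ) (G' : SimpleGraph (Fin m')), G'.CliqueFree (s+1) ∧ Arr s G' ∧
      ∀ v : Fin m', ¬ Arr s (G'.induce {x | x ≠ v}) := by
  intro m
  induction m using Nat.strong_induction_on with
  | _ m ih =>
    intro G hfree harr
    by_cases hcrit : ∀ v : Fin m, ¬ Arr s (G.induce {x | x ≠ v})
    · exact ⟨m, G, hfree, harr, hcrit⟩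
    · push_neg at hcrit
      obtain ⟨v, hv⟩ := hcrit
      have hm : 0 < m := by have := v.isLt; omega
      have e : {x : Fin m // x ≠ v} ≃ Fin (m-1) :=
        Fintype.equivFinOfCardEq (card_ne m v)
      set G' : SimpleGraph (Fin (m-1)) := (G.induce {x | x ≠ v}).comap e.symm with hG'
      have hadj1 : ∀ a b, G'.Adj a b → G.Adj (e.symm a).val (e.symm b).val := by
        intro a b hab
        simpa [hG'] using hab
      have hadj2 : ∀ (a b : {x : Fin m // x ≠ v}),
          (G.induce {x | x ≠ v}).Adj a b → G'.Adj (e a) (e b) := by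
        intro a b hab
        simp only [hG', SimpleGraph.comap_adj, Equiv.symm_apply_apply]
        exact hab
      have hfree' : G'.CliqueFree (s+1) := by
        apply cliquefree_pull (s+1) (fun a => (e.symm a).val)
        · intro a b hab
          exact e.symm.injective (Subtype.ext hab)
        · exact hadj1
        · exact hfree
      have harr' : Arr s G' := by
        apply arr_push s (fun a : {x : Fin m // x ≠ v} => e a) e.injective hadj2 hv
      exact ih (m-1) (by omega) G' hfree' harr'

/-- extraction of a vertex-critical arrowing induced subgraph, keeping a
distinguished low-degree vertex -/
lemma exists_critical_u (s : ℕ) (d : ℕ) :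
    ∀ (m : ℕ) (G : SimpleGraph (Fin m)) (u : Fin m) (A : Finset (Fin m)),
    G.CliqueFree (s+1) → Arr s G → ¬ Arr s (G.induce {x | x ≠ u}) →
    (∀ x, G.Adj u x → x ∈ A) → A.card ≤ d →
    ∃ (m' : ℕ) (G' : SimpleGraph (Fin m')) (u' : Fin m') (A' : Finset (Fin m')),
      G'.CliqueFree (s+1) ∧ Arr s G' ∧
      (∀ v : Fin m', ¬ Arr s (G'.induce {x | x ≠ v})) ∧
      (∀ x, G'.Adj u' x → x ∈ A') ∧ A'.card ≤ d := by
  intro m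
  induction m using Nat.strong_induction_on with
  | _ m ih =>
    intro G u A hfree harr hu hA hAcard
    by_cases hcrit : ∀ v : Fin m, ¬ Arr s (G.induce {x | x ≠ v})
    · exact ⟨m, G, u, A, hfree, harr, hcrit, hA, hAcard⟩
    · push_neg at hcrit
      obtain ⟨v, hv⟩ := hcrit
      have hm : 0 < m := by have := v.isLt; omega
      have hvu : u ≠ v := by rintro rfl; exact hu hv
      have e : {x : Fin m // x ≠ v} ≃ Fin (m-1) :=
        Fintype.equivFinOfCardEq (card_ne m v)
      set G' : SimpleGraph (Fin (m-1)) := (G.induce {x | x ≠ v}).comap e.symm with hG'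
      have hadj1 : ∀ a b, G'.Adj a b → G.Adj (e.symm a).val (e.symm b).val := by
        intro a b hab; simpa [hG'] using hab
      have hadj2 : ∀ (a b : {x : Fin m // x ≠ v}),
          (G.induce {x | x ≠ v}).Adj a b → G'.Adj (e a) (e b) := by
        intro a b hab
        simp only [hG', SimpleGraph.comap_adj, Equiv.symm_apply_apply]
        exact hab
      have hfree' : G'.CliqueFree (s+1) :=
        cliquefree_pull (s+1) (fun a => (e.symm a).val)
          (fun a b hab => e.symm.injective (Subtype.ext hab)) hadj1 hfree
      have harr' : Arr s G' :=
        arr_push s (fun a : {x : Fin m // x ≠ v} => e a) e.injective hadj2 hv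
      set u' : Fin (m-1) := e ⟨u, hvu⟩ with hu'
      set A' : Finset (Fin (m-1)) := A.image
          (fun x => if h : x ≠ v then e ⟨x, h⟩ else u') with hA'
      have hAmem : ∀ x, G'.Adj u' x → x ∈ A' := by
        intro x hx
        have hadj : G.Adj u (e.symm x).val := by
          have := hadj1 u' x hx
          rwa [hu', Equiv.symm_apply_apply] at this
        rw [hA']
        apply Finset.mem_image.mpr
        refine ⟨(e.symm x).val, hA _ hadj, ?_⟩
        rw [dif_pos (e.symm x).2]
        simp
      have hAcard' : A'.card ≤ d := le_trans Finset.card_image_le hAcard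
      have hu'' : ¬ Arr s (G'.induce {x | x ≠ u'}) := by
        intro harr2
        apply hu
        refine arr_push (G := G'.induce {x | x ≠ u'}) (G' := G.induce {x | x ≠ u}) s
          (fun x => (⟨(e.symm x.1).val, ?_⟩ : {y : Fin m // y ∈ {x | x ≠ u}})) ?_ ?_ harr2
        · intro hcontra
          apply x.2
          have h2 : e.symm x.1 = ⟨u, hvu⟩ := Subtype.ext hcontra
          have h3 : e (e.symm x.1) = e ⟨u, hvu⟩ := congrArg e h2
          simpa [hu'] using h3
        · intro a b hab
          simp only [Subtype.mk.injEq] at hab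
          exact Subtype.ext (e.symm.injective (Subtype.ext hab))
        · intro a b hab
          exact hadj1 a.1 b.1 hab
      exact ih (m-1) (by omega) G' u' A' hfree' harr' hu'' hAmem hAcard'


section BigGraph

abbrev VV (s k : ℕ) := (Fin (s-1) × Fin (s-1) × Fin 2 × Fin k) ⊕ (Fin (s-1) ⊕ (Fin (s-1) ⊕ Unit))

variable {s k : ℕ}

def eng (i j : Fin (s-1)) (e : Fin 2) (v : Fin k) : VV s k := Sum.inl (i,j,e,v)
def va (i : Fin (s-1)) : VV s k := Sum.inr (Sum.inl i)
def vb (j : Fin (s-1)) : VV s k := Sum.inr (Sum.inr (Sum.inl j))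
def vu : VV s k := Sum.inr (Sum.inr (Sum.inr ()))

variable (D' : SimpleGraph (Fin k)) (E0 Y : Finset (Fin k))

def attA (e : Fin 2) : Finset (Fin k) := if e = 0 then E0 else Y
def attB (e : Fin 2) : Finset (Fin k) := if e = 0 then Y else E0

def bgAdj : VV s k → VV s k → Prop
  | Sum.inl (i,j,e,v), Sum.inl (i',j',e',v') => i = i' ∧ j = j' ∧ e = e' ∧ D'.Adj v v'
  | Sum.inl (i,_,e,v), Sum.inr (Sum.inl i') => i = i' ∧ v ∈ attA E0 Y e
  | Sum.inl (_,j,e,v), Sum.inr (Sum.inr (Sum.inl j')) => j = j' ∧ v ∈ attB E0 Y e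
  | Sum.inl _, Sum.inr (Sum.inr (Sum.inr _)) => False
  | Sum.inr (Sum.inl i'), Sum.inl (i,_,e,v) => i = i' ∧ v ∈ attA E0 Y e
  | Sum.inr (Sum.inl i), Sum.inr (Sum.inl i') => i ≠ i'
  | Sum.inr (Sum.inl _), Sum.inr (Sum.inr (Sum.inl _)) => False
  | Sum.inr (Sum.inl _), Sum.inr (Sum.inr (Sum.inr _)) => True
  | Sum.inr (Sum.inr (Sum.inl j')), Sum.inl (_,j,e,v) => j = j' ∧ v ∈ attB E0 Y e
  | Sum.inr (Sum.inr (Sum.inl _)), Sum.inr (Sum.inl _) => False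
  | Sum.inr (Sum.inr (Sum.inl j)), Sum.inr (Sum.inr (Sum.inl j')) => j ≠ j'
  | Sum.inr (Sum.inr (Sum.inl _)), Sum.inr (Sum.inr (Sum.inr _)) => True
  | Sum.inr (Sum.inr (Sum.inr _)), Sum.inl _ => False
  | Sum.inr (Sum.inr (Sum.inr _)), Sum.inr (Sum.inl _) => True
  | Sum.inr (Sum.inr (Sum.inr _)), Sum.inr (Sum.inr (Sum.inl _)) => True
  | Sum.inr (Sum.inr (Sum.inr _)), Sum.inr (Sum.inr (Sum.inr _)) => False

def BG : SimpleGraph (VV s k) where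
  Adj := bgAdj D' E0 Y
  symm := by
    constructor
    rintro (⟨i,j,e,v⟩ | (i | (j | u))) (⟨i',j',e',v'⟩ | (i' | (j' | u'))) h <;>
      simp only [bgAdj] at h ⊢ <;>
      first
        | exact ⟨h.1.symm, h.2.1.symm, h.2.2.1.symm, h.2.2.2.symm⟩
        | exact ⟨h.1, h.2⟩
        | exact h.symm
        | exact h.elim
        | exact h
        | trivial
  loopless := by
    constructor
    rintro (⟨i,j,e,v⟩ | (i | (j | u))) h <;> simp only [bgAdj] at h
    · exact D'.irrefl h.2.2.2
    · exact h rfl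
    · exact h rfl

lemma adj_eng_eng {i j i' j' : Fin (s-1)} {e e' : Fin 2} {v v' : Fin k} :
    (BG D' E0 Y).Adj (eng i j e v) (eng i' j' e' v') ↔
      (i = i' ∧ j = j' ∧ e = e' ∧ D'.Adj v v') := Iff.rfl

lemma adj_eng_va {i j i' : Fin (s-1)} {e : Fin 2} {v : Fin k} :
    (BG D' E0 Y).Adj (eng i j e v) (va i') ↔ (i = i' ∧ v ∈ attA E0 Y e) := Iff.rfl

lemma adj_va_eng {i j i' : Fin (s-1)} {e : Fin 2} {v : Fin k} :
    (BG D' E0 Y).Adj (va i') (eng i j e v) ↔ (i = i' ∧ v ∈ attA E0 Y e) := Iff.rfl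

lemma adj_eng_vb {i j j' : Fin (s-1)} {e : Fin 2} {v : Fin k} :
    (BG D' E0 Y).Adj (eng i j e v) (vb j') ↔ (j = j' ∧ v ∈ attB E0 Y e) := Iff.rfl

lemma adj_vb_eng {i j j' : Fin (s-1)} {e : Fin 2} {v : Fin k} :
    (BG D' E0 Y).Adj (vb j') (eng i j e v) ↔ (j = j' ∧ v ∈ attB E0 Y e) := Iff.rfl

lemma adj_va_va {i i' : Fin (s-1)} :
    (BG D' E0 Y).Adj (va i) (va i' : VV s k) ↔ i ≠ i' := Iff.rfl

lemma adj_vb_vb {j j' : Fin (s-1)} :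
    (BG D' E0 Y).Adj (vb j) (vb j' : VV s k) ↔ j ≠ j' := Iff.rfl

lemma adj_va_vb {i j : Fin (s-1)} :
    ¬ (BG D' E0 Y).Adj (va i) (vb j : VV s k) := fun h => h

lemma adj_vu_va {i : Fin (s-1)} : (BG D' E0 Y).Adj vu (va i : VV s k) := trivial
lemma adj_vu_vb {j : Fin (s-1)} : (BG D' E0 Y).Adj vu (vb j : VV s k) := trivial
lemma adj_vu_eng {i j : Fin (s-1)} {e : Fin 2} {v : Fin k} :
    ¬ (BG D' E0 Y).Adj vu (eng i j e v) := fun h => h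

lemma eng_injective (i j : Fin (s-1)) (e : Fin 2) :
    Function.Injective (fun v : Fin k => (eng i j e v : VV s k)) := by
  intro a b h; simpa [eng] using h

lemma va_injective : Function.Injective (fun i : Fin (s-1) => (va i : VV s k)) := by
  intro a b h; simpa [va] using h

lemma vb_injective : Function.Injective (fun j : Fin (s-1) => (vb j : VV s k)) := by
  intro a b h; simpa [vb] using h

lemma bg_loc (hs : 3 ≤ s) (T : Finset (VV s k))
    (hT : (BG D' E0 Y).IsClique (↑T : Set (VV s k))) (hu : vu ∉ T) (hcard : s ≤ T.card) :
    ∃ (i j : Fin (s-1)) (e : Fin 2) (Q : Finset (Fin k)),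
      D'.IsClique ↑Q ∧
      ((T = Q.image (eng i j e) ∧ T.card = Q.card) ∨
       (T = insert (va i) (Q.image (eng i j e)) ∧ T.card = Q.card + 1 ∧ Q ⊆ attA E0 Y e) ∨
       (T = insert (vb j) (Q.image (eng i j e)) ∧ T.card = Q.card + 1 ∧ Q ⊆ attB E0 Y e)) := by
  have hadj : ∀ x ∈ T, ∀ y ∈ T, x ≠ y → (BG D' E0 Y).Adj x y :=
    fun x hx y hy hne => hT (Finset.mem_coe.mpr hx) (Finset.mem_coe.mpr hy) hne
  have hA1 : ∀ i i' : Fin (s-1), va i ∈ T → va i' ∈ T → i = i' := by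
    intro i i' hi hi'
    by_contra hne
    have hall : ∀ x ∈ T, ∃ i'' : Fin (s-1), x = (va i'' : VV s k) := by
      intro x hx
      rcases x with ⟨i₀,j₀,e₀,v₀⟩ | (i₀ | (j₀ | u₀))
      · have h1 := hadj _ hx _ hi (by simp [eng, va])
        have h2 := hadj _ hx _ hi' (by simp [eng, va])
        exact absurd ((h1.1).symm.trans h2.1) hne
      · exact ⟨i₀, rfl⟩
      · exact absurd (hadj _ hi _ hx (by simp [va, vb])) (adj_va_vb D' E0 Y)
      · cases u₀; exact absurd hx hu
    have hsub : T ⊆ Finset.univ.image (fun i : Fin (s-1) => (va i : VV s k)) := by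
      intro x hx
      obtain ⟨i'', rfl⟩ := hall x hx
      exact Finset.mem_image.mpr ⟨i'', Finset.mem_univ _, rfl⟩
    have hc := Finset.card_le_card hsub
    have hc2 := Finset.card_image_le (f := fun i : Fin (s-1) => (va i : VV s k))
        (s := Finset.univ)
    simp only [Finset.card_univ, Fintype.card_fin] at hc2
    omega
  have hB1 : ∀ j j' : Fin (s-1), vb j ∈ T → vb j' ∈ T → j = j' := by
    intro j j' hj hj'
    by_contra hne
    have hall : ∀ x ∈ T, ∃ j'' : Fin (s-1), x = (vb j'' : VV s k) := by
      intro x hx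
      rcases x with ⟨i₀,j₀,e₀,v₀⟩ | (i₀ | (j₀ | u₀))
      · have h1 := hadj _ hx _ hj (by simp [eng, vb])
        have h2 := hadj _ hx _ hj' (by simp [eng, vb])
        exact absurd ((h1.1).symm.trans h2.1) hne
      · exact absurd (hadj _ hj _ hx (by simp [va, vb])) (fun h => h)
      · exact ⟨j₀, rfl⟩
      · cases u₀; exact absurd hx hu
    have hsub : T ⊆ Finset.univ.image (fun j : Fin (s-1) => (vb j : VV s k)) := by
      intro x hx
      obtain ⟨j'', rfl⟩ := hall x hx
      exact Finset.mem_image.mpr ⟨j'', Finset.mem_univ _, rfl⟩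
    have hc := Finset.card_le_card hsub
    have hc2 := Finset.card_image_le (f := fun j : Fin (s-1) => (vb j : VV s k))
        (s := Finset.univ)
    simp only [Finset.card_univ, Fintype.card_fin] at hc2
    omega
  have hAB : ∀ (i j : Fin (s-1)), va i ∈ T → vb j ∈ T → False := by
    intro i j hi hj
    exact adj_va_vb D' E0 Y (hadj _ hi _ hj (by simp [va, vb]))
  classical
  set TE := T.filter (fun x => ∃ i j e v, x = (eng i j e v : VV s k)) with hTE
  set R := T.filter (fun x => ¬ ∃ i j e v, x = (eng i j e v : VV s k)) with hR
  have hsplit : TE.card + R.card = T.card :=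
    Finset.card_filter_add_card_filter_not _
  have hR1 : R.card ≤ 1 := by
    apply Finset.card_le_one.mpr
    intro a ha b hb
    have haT := (Finset.mem_filter.mp ha).1
    have hane := (Finset.mem_filter.mp ha).2
    have hbT := (Finset.mem_filter.mp hb).1
    have hbne := (Finset.mem_filter.mp hb).2
    rcases a with ⟨i₀,j₀,e₀,v₀⟩ | (i₀ | (j₀ | u₀))
    · exact absurd ⟨i₀,j₀,e₀,v₀,rfl⟩ hane
    · rcases b with ⟨i₁,j₁,e₁,v₁⟩ | (i₁ | (j₁ | u₁))
      · exact absurd ⟨i₁,j₁,e₁,v₁,rfl⟩ hbne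
      · exact congrArg _ (congrArg _ (hA1 i₀ i₁ haT hbT))
      · exact absurd (hAB i₀ j₁ haT hbT) not_false
      · cases u₁; exact absurd hbT hu
    · rcases b with ⟨i₁,j₁,e₁,v₁⟩ | (i₁ | (j₁ | u₁))
      · exact absurd ⟨i₁,j₁,e₁,v₁,rfl⟩ hbne
      · exact absurd (hAB i₁ j₀ hbT haT) not_false
      · have := hB1 j₀ j₁ haT hbT
        subst this; rfl
      · cases u₁; exact absurd hbT hu
    · cases u₀; exact absurd haT hu
  have hTEpos : 2 ≤ TE.card := by omega
  obtain ⟨x₁, hx₁⟩ : TE.Nonempty := Finset.card_pos.mp (by omega)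
  have hx₁T := (Finset.mem_filter.mp hx₁).1
  obtain ⟨i, j, e, v₁, rfl⟩ := (Finset.mem_filter.mp hx₁).2
  have hsame : ∀ x ∈ TE, ∃ v, x = (eng i j e v : VV s k) := by
    intro x hx
    have hxT := (Finset.mem_filter.mp hx).1
    obtain ⟨i',j',e',v',rfl⟩ := (Finset.mem_filter.mp hx).2
    by_cases hxx : (eng i' j' e' v' : VV s k) = eng i j e v₁
    · simp only [eng, Sum.inl.injEq, Prod.mk.injEq] at hxx
      exact ⟨v₁, by rw [hxx.1, hxx.2.1, hxx.2.2.1, hxx.2.2.2]⟩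
    · have h := hadj _ hxT _ hx₁T hxx
      exact ⟨v', by rw [h.1, h.2.1, h.2.2.1]⟩
  set Q := Finset.univ.filter (fun v => (eng i j e v : VV s k) ∈ T) with hQ
  have hTEQ : TE = Q.image (fun v => (eng i j e v : VV s k)) := by
    ext x
    constructor
    · intro hx
      obtain ⟨v, rfl⟩ := hsame x hx
      exact Finset.mem_image.mpr ⟨v,
        Finset.mem_filter.mpr ⟨Finset.mem_univ _, (Finset.mem_filter.mp hx).1⟩, rfl⟩
    · intro hx
      obtain ⟨v, hv, rfl⟩ := Finset.mem_image.mp hx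
      exact Finset.mem_filter.mpr ⟨(Finset.mem_filter.mp hv).2, ⟨i,j,e,v,rfl⟩⟩
  have hQclique : D'.IsClique ↑Q := by
    intro a ha b hb hab
    have haT := (Finset.mem_filter.mp (Finset.mem_coe.mp ha)).2
    have hbT := (Finset.mem_filter.mp (Finset.mem_coe.mp hb)).2
    have h := hadj _ haT _ hbT (by simp [eng, hab])
    exact h.2.2.2
  have hTEcard : TE.card = Q.card := by
    rw [hTEQ, Finset.card_image_of_injective _ (eng_injective i j e)]
  by_cases hRe : R = ∅
  · have hR0 : R.card = 0 := by rw [hRe]; rfl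
    have hTeq : TE = T := Finset.eq_of_subset_of_card_le (Finset.filter_subset _ _) (by omega)
    refine ⟨i, j, e, Q, hQclique, Or.inl ⟨?_, ?_⟩⟩
    · rw [← hTeq, hTEQ]
    · omega
  · obtain ⟨t₀, ht₀⟩ : R.Nonempty := Finset.nonempty_of_ne_empty hRe
    have hRcard : R.card = 1 := le_antisymm hR1 (Finset.card_pos.mpr ⟨t₀, ht₀⟩)
    have ht₀T := (Finset.mem_filter.mp ht₀).1
    have ht₀ne := (Finset.mem_filter.mp ht₀).2
    have hTins : T = insert t₀ TE := by
      apply Finset.Subset.antisymm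
      · intro x hx
        by_cases hxe : ∃ i j e v, x = (eng i j e v : VV s k)
        · exact Finset.mem_insert.mpr (Or.inr (Finset.mem_filter.mpr ⟨hx, hxe⟩))
        · have hxR : x ∈ R := Finset.mem_filter.mpr ⟨hx, hxe⟩
          have : x = t₀ := Finset.card_le_one.mp hR1 x hxR t₀ ht₀
          exact Finset.mem_insert.mpr (Or.inl this)
      · intro x hx
        rcases Finset.mem_insert.mp hx with rfl | hx
        · exact ht₀T
        · exact (Finset.mem_filter.mp hx).1
    have ht₀nTE : t₀ ∉ TE := fun h => ht₀ne (Finset.mem_filter.mp h).2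
    have hcardins : T.card = TE.card + 1 := by
      rw [hTins, Finset.card_insert_of_notMem ht₀nTE]
    rcases t₀ with ⟨i₀,j₀,e₀,v₀⟩ | (i₀ | (j₀ | u₀))
    · exact absurd ⟨i₀,j₀,e₀,v₀,rfl⟩ ht₀ne
    · -- terminal is va i₀
      have hadj₀ := hadj _ ht₀T _ hx₁T (by simp [va, eng])
      have hii : i = i₀ := hadj₀.1
      subst hii
      refine ⟨i, j, e, Q, hQclique, Or.inr (Or.inl ⟨?_, ?_, ?_⟩)⟩
      · rw [hTins, hTEQ]; rfl
      · omega
      · intro v hv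
        have hvT : (eng i j e v : VV s k) ∈ T := (Finset.mem_filter.mp hv).2
        have h := hadj _ ht₀T _ hvT (by simp [va, eng])
        exact h.2
    · -- terminal is vb j₀
      have hadj₀ := hadj _ ht₀T _ hx₁T (by simp [vb, eng])
      have hjj : j = j₀ := hadj₀.1
      subst hjj
      refine ⟨i, j, e, Q, hQclique, Or.inr (Or.inr ⟨?_, ?_, ?_⟩)⟩
      · rw [hTins, hTEQ]; rfl
      · omega
      · intro v hv
        have hvT : (eng i j e v : VV s k) ∈ T := (Finset.mem_filter.mp hv).2
        have h := hadj _ ht₀T _ hvT (by simp [vb, eng])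
        exact h.2
    · cases u₀; exact absurd ht₀T hu

def GoodC (s : ℕ) {V : Type*} (G : SimpleGraph V) (c : V → Fin 2) : Prop :=
  ∀ (col : Fin 2) (t : Finset V), G.IsNClique s t → ∃ v ∈ t, c v ≠ col

lemma goodC_flip {s : ℕ} {V : Type*} {G : SimpleGraph V} {c : V → Fin 2}
    (h : GoodC s G c) : GoodC s G (fun v => flip2 (c v)) := by
  intro col t ht
  obtain ⟨v, hv, hne⟩ := h (flip2 col) t ht
  refine ⟨v, hv, fun hEq => hne ?_⟩
  have hEq' : flip2 (c v) = col := hEq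
  rw [← flip2_flip2 (c v), hEq']

def cg {s k : ℕ} (χ : Fin k → Fin 2) : VV s k → Fin 2
  | Sum.inl (_,_,e,v) => if e = 0 then χ v else flip2 (χ v)
  | Sum.inr (Sum.inl _) => 0
  | Sum.inr (Sum.inr (Sum.inl _)) => 1
  | Sum.inr (Sum.inr (Sum.inr _)) => 0

lemma attA_subset {k : ℕ} {E0 Y M : Finset (Fin k)} (hE0M : E0 ⊆ M) (hYM : Y ⊆ M)
    (e : Fin 2) : attA E0 Y e ⊆ M := by
  unfold attA; split <;> assumption

lemma attB_subset {k : ℕ} {E0 Y M : Finset (Fin k)} (hE0M : E0 ⊆ M) (hYM : Y ⊆ M)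
    (e : Fin 2) : attB E0 Y e ⊆ M := by
  unfold attB; split <;> assumption

lemma isnclique_eng (i j : Fin (s-1)) (e : Fin 2) {Q : Finset (Fin k)} {n : ℕ}
    (hQ : D'.IsNClique n Q) :
    (BG D' E0 Y).IsNClique n (Q.image (fun v => eng i j e v)) :=
  isNClique_image _ (eng_injective i j e) (fun _ _ hab => (adj_eng_eng D' E0 Y).mpr ⟨rfl, rfl, rfl, hab⟩) hQ

lemma bg_cliquefree (hs : 3 ≤ s) (M : Finset (Fin k))
    (hE0M : E0 ⊆ M) (hYM : Y ⊆ M)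
    (hDfree : D'.CliqueFree (s+1))
    (hMfree : ∀ Q, Q ⊆ M → ¬ D'.IsNClique s Q) :
    (BG (s := s) D' E0 Y).CliqueFree (s+1) := by
  intro T hT
  by_cases hu : (vu : VV s k) ∈ T
  · have herase : ∀ x ∈ T.erase vu,
        (∃ i : Fin (s-1), x = (va i : VV s k)) ∨ (∃ j : Fin (s-1), x = (vb j : VV s k)) := by
      intro x hx
      have hxT := Finset.mem_of_mem_erase hx
      have hxne := Finset.ne_of_mem_erase hx
      have hadjx := hT.1 (Finset.mem_coe.mpr hxT) (Finset.mem_coe.mpr hu) hxne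
      rcases x with ⟨i₀,j₀,e₀,v₀⟩ | (i₀ | (j₀ | u₀))
      · exact absurd hadjx (fun h => h)
      · exact Or.inl ⟨i₀, rfl⟩
      · exact Or.inr ⟨j₀, rfl⟩
      · cases u₀; exact absurd rfl hxne
    have hec : (T.erase vu).card = s := by
      rw [Finset.card_erase_of_mem hu, hT.2]
      omega
    by_cases hva : ∃ i : Fin (s-1), (va i : VV s k) ∈ T.erase vu
    · by_cases hvb : ∃ j : Fin (s-1), (vb j : VV s k) ∈ T.erase vu
      · obtain ⟨i, hi⟩ := hva
        obtain ⟨j, hj⟩ := hvb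
        exact adj_va_vb D' E0 Y (hT.1 (Finset.mem_coe.mpr (Finset.mem_of_mem_erase hi))
          (Finset.mem_coe.mpr (Finset.mem_of_mem_erase hj)) (by simp [va, vb]))
      · push_neg at hvb
        have hsub : T.erase vu ⊆ Finset.univ.image (fun i : Fin (s-1) => (va i : VV s k)) := by
          intro x hx
          rcases herase x hx with ⟨i, rfl⟩ | ⟨j, rfl⟩
          · exact Finset.mem_image.mpr ⟨i, Finset.mem_univ _, rfl⟩
          · exact absurd hx (hvb j)
        have hc := Finset.card_le_card hsub
        have hc2 := Finset.card_image_le (f := fun i : Fin (s-1) => (va i : VV s k))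
            (s := Finset.univ)
        simp only [Finset.card_univ, Fintype.card_fin] at hc2
        omega
    · push_neg at hva
      have hsub : T.erase vu ⊆ Finset.univ.image (fun j : Fin (s-1) => (vb j : VV s k)) := by
        intro x hx
        rcases herase x hx with ⟨i, rfl⟩ | ⟨j, rfl⟩
        · exact absurd hx (hva i)
        · exact Finset.mem_image.mpr ⟨j, Finset.mem_univ _, rfl⟩
      have hc := Finset.card_le_card hsub
      have hc2 := Finset.card_image_le (f := fun j : Fin (s-1) => (vb j : VV s k))
          (s := Finset.univ)
      simp only [Finset.card_univ, Fintype.card_fin] at hc2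
      omega
  · have hcard : s ≤ T.card := by rw [hT.2]; omega
    obtain ⟨i, j, e, Q, hQcl, hcases⟩ := bg_loc D' E0 Y hs T hT.1 hu hcard
    rcases hcases with ⟨hTeq, hcardeq⟩ | ⟨hTeq, hcardeq, hsub⟩ | ⟨hTeq, hcardeq, hsub⟩
    · exact hDfree Q ⟨hQcl, by have := hT.2; omega⟩
    · exact hMfree Q (hsub.trans (attA_subset hE0M hYM e))
        ⟨hQcl, by have := hT.2; omega⟩
    · exact hMfree Q (hsub.trans (attB_subset hE0M hYM e))
        ⟨hQcl, by have := hT.2; omega⟩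

lemma bg_arrows (hs : 3 ≤ s) (M : Finset (Fin k)) (z : Fin k)
    (hPM : ∀ c : Fin k → Fin 2, GoodC s D' c → ∀ col : Fin 2,
        ∃ Q, Q ⊆ M ∧ D'.IsNClique (s-1) Q ∧ ∀ v ∈ Q, c v = col)
    (hE0 : ∀ Q : Finset (Fin k), Q ⊆ M → z ∉ Q → Q ⊆ E0)
    (hQY : ∀ Q : Finset (Fin k), Q ⊆ M → D'.IsClique ↑Q → z ∈ Q → Q ⊆ Y) :
    Arr s (BG (s := s) D' E0 Y) := by
  have hs1 : s - 1 + 1 = s := by omega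
  intro c
  by_cases hbad : ∃ (i j : Fin (s-1)) (e : Fin 2) (col : Fin 2) (Q : Finset (Fin k)),
      D'.IsNClique s Q ∧ ∀ v ∈ Q, c (eng i j e v) = col
  · obtain ⟨i, j, e, col, Q, hQ, hmono⟩ := hbad
    refine ⟨col, Q.image (fun v => eng i j e v), isnclique_eng D' E0 Y i j e hQ, ?_⟩
    intro x hx
    obtain ⟨v, hv, rfl⟩ := Finset.mem_image.mp hx
    exact hmono v hv
  · push_neg at hbad
    have hgood : ∀ (i j : Fin (s-1)) (e : Fin 2), GoodC s D' (fun v => c (eng i j e v)) :=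
      fun i j e col t ht => hbad i j e col t ht
    have hs1' : 0 < s - 1 := by omega
    set i₀ : Fin (s-1) := ⟨0, hs1'⟩ with hi₀
    by_cases hcoll : ∃ (i j : Fin (s-1)), c (va i : VV s k) = c (vb j : VV s k)
    · obtain ⟨i, j, hcij⟩ := hcoll
      set col := c (va i : VV s k) with hcol
      obtain ⟨Q, hQM, hQcl, hQmono⟩ := hPM _ (hgood i j col) col
      by_cases hz : z ∈ Q
      · have hQY' := hQY Q hQM hQcl.1 hz
        rcases fin2_eq_or col with h0 | h1
        · -- terminal vb j, engine e = col = 0, attB 0 = Y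
          refine ⟨col, insert (vb j) (Q.image (fun v => eng i j col v)), ?_, ?_⟩
          · have base := isnclique_eng D' E0 Y i j col hQcl
            have hins := base.insert (a := (vb j : VV s k)) (by
              intro b hb
              obtain ⟨v, hv, rfl⟩ := Finset.mem_image.mp hb
              refine (BG D' E0 Y).adj_symm ?_
              refine (adj_eng_vb D' E0 Y).mpr ⟨rfl, ?_⟩
              rw [h0]
              show v ∈ attB E0 Y 0
              rw [show attB E0 Y 0 = Y from if_pos rfl]
              exact hQY' hv)
            rwa [hs1] at hins
          · intro x hx
            rcases Finset.mem_insert.mp hx with rfl | hx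
            · exact hcij.symm ▸ rfl
            · obtain ⟨v, hv, rfl⟩ := Finset.mem_image.mp hx
              exact hQmono v hv
        · -- terminal va i, engine e = col = 1, attA 1 = Y
          refine ⟨col, insert (va i) (Q.image (fun v => eng i j col v)), ?_, ?_⟩
          · have base := isnclique_eng D' E0 Y i j col hQcl
            have hins := base.insert (a := (va i : VV s k)) (by
              intro b hb
              obtain ⟨v, hv, rfl⟩ := Finset.mem_image.mp hb
              refine (BG D' E0 Y).adj_symm ?_
              refine (adj_eng_va D' E0 Y).mpr ⟨rfl, ?_⟩
              rw [h1]
              show v ∈ attA E0 Y 1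
              rw [show attA E0 Y 1 = Y from if_neg (by decide)]
              exact hQY' hv)
            rwa [hs1] at hins
          · intro x hx
            rcases Finset.mem_insert.mp hx with rfl | hx
            · rfl
            · obtain ⟨v, hv, rfl⟩ := Finset.mem_image.mp hx
              exact hQmono v hv
      · have hQE0 := hE0 Q hQM hz
        rcases fin2_eq_or col with h0 | h1
        · -- terminal va i, engine e = col = 0, attA 0 = E0
          refine ⟨col, insert (va i) (Q.image (fun v => eng i j col v)), ?_, ?_⟩
          · have base := isnclique_eng D' E0 Y i j col hQcl
            have hins := base.insert (a := (va i : VV s k)) (by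
              intro b hb
              obtain ⟨v, hv, rfl⟩ := Finset.mem_image.mp hb
              refine (BG D' E0 Y).adj_symm ?_
              refine (adj_eng_va D' E0 Y).mpr ⟨rfl, ?_⟩
              rw [h0]
              show v ∈ attA E0 Y 0
              rw [show attA E0 Y 0 = E0 from if_pos rfl]
              exact hQE0 hv)
            rwa [hs1] at hins
          · intro x hx
            rcases Finset.mem_insert.mp hx with rfl | hx
            · rfl
            · obtain ⟨v, hv, rfl⟩ := Finset.mem_image.mp hx
              exact hQmono v hv
        · -- terminal vb j, engine e = col = 1, attB 1 = E0
          refine ⟨col, insert (vb j) (Q.image (fun v => eng i j col v)), ?_, ?_⟩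
          · have base := isnclique_eng D' E0 Y i j col hQcl
            have hins := base.insert (a := (vb j : VV s k)) (by
              intro b hb
              obtain ⟨v, hv, rfl⟩ := Finset.mem_image.mp hb
              refine (BG D' E0 Y).adj_symm ?_
              refine (adj_eng_vb D' E0 Y).mpr ⟨rfl, ?_⟩
              rw [h1]
              show v ∈ attB E0 Y 1
              rw [show attB E0 Y 1 = E0 from if_neg (by decide)]
              exact hQE0 hv)
            rwa [hs1] at hins
          · intro x hx
            rcases Finset.mem_insert.mp hx with rfl | hx
            · exact hcij.symm ▸ rfl
            · obtain ⟨v, hv, rfl⟩ := Finset.mem_image.mp hx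
              exact hQmono v hv
    · push_neg at hcoll
      set colA := c (va i₀ : VV s k) with hcolA
      have hvaAll : ∀ i : Fin (s-1), c (va i : VV s k) = colA := by
        intro i
        have h1 := eq_flip2_of_ne (hcoll i i₀)
        have h2 := eq_flip2_of_ne (hcoll i₀ i₀)
        rw [h1, ← h2]
      have hvbAll : ∀ j : Fin (s-1), c (vb j : VV s k) = flip2 colA := by
        intro j
        have h1 : c (vb j : VV s k) ≠ colA := fun h => hcoll i₀ j h.symm
        have := eq_flip2_of_ne h1
        rw [this, hcolA]
      have hclA : (BG D' E0 Y).IsNClique (s-1)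
          (Finset.univ.image (fun i : Fin (s-1) => (va i : VV s k))) := by
        constructor
        · intro x hx y hy hne
          simp only [Finset.coe_image, Set.mem_image] at hx hy
          obtain ⟨a, _, rfl⟩ := hx
          obtain ⟨b, _, rfl⟩ := hy
          exact (adj_va_va D' E0 Y).mpr (fun h => hne (by rw [h]))
        · rw [Finset.card_image_of_injective _ va_injective]
          simp
      have hclB : (BG D' E0 Y).IsNClique (s-1)
          (Finset.univ.image (fun j : Fin (s-1) => (vb j : VV s k))) := by
        constructor
        · intro x hx y hy hne
          simp only [Finset.coe_image, Set.mem_image] at hx hy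
          obtain ⟨a, _, rfl⟩ := hx
          obtain ⟨b, _, rfl⟩ := hy
          exact (adj_vb_vb D' E0 Y).mpr (fun h => hne (by rw [h]))
        · rw [Finset.card_image_of_injective _ vb_injective]
          simp
      by_cases hcu : c (vu : VV s k) = colA
      · refine ⟨colA, insert vu (Finset.univ.image (fun i : Fin (s-1) => (va i : VV s k))), ?_, ?_⟩
        · have hins := hclA.insert (a := (vu : VV s k)) (by
            intro b hb
            obtain ⟨a, _, rfl⟩ := Finset.mem_image.mp hb
            exact adj_vu_va D' E0 Y)
          rwa [hs1] at hins
        · intro x hx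
          rcases Finset.mem_insert.mp hx with rfl | hx
          · exact hcu
          · obtain ⟨a, _, rfl⟩ := Finset.mem_image.mp hx
            exact hvaAll a
      · refine ⟨flip2 colA, insert vu (Finset.univ.image (fun j : Fin (s-1) => (vb j : VV s k))), ?_, ?_⟩
        · have hins := hclB.insert (a := (vu : VV s k)) (by
            intro b hb
            obtain ⟨a, _, rfl⟩ := Finset.mem_image.mp hb
            exact adj_vu_vb D' E0 Y)
          rwa [hs1] at hins
        · intro x hx
          rcases Finset.mem_insert.mp hx with rfl | hx
          · exact eq_flip2_of_ne hcu
          · obtain ⟨a, _, rfl⟩ := Finset.mem_image.mp hx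
            exact hvbAll a

lemma bg_good_coloring (hs : 3 ≤ s) (χ : Fin k → Fin 2)
    (hχg : GoodC s D' χ) (hχgf : GoodC s D' (fun v => flip2 (χ v)))
    (hA : ∀ Q, Q ⊆ E0 → D'.IsNClique (s-1) Q → ∃ v ∈ Q, χ v ≠ 0)
    (hY1 : ∀ Q, Q ⊆ Y → D'.IsNClique (s-1) Q → ∃ v ∈ Q, χ v ≠ 1) :
    ∀ (col : Fin 2) (T : Finset (VV s k)), (BG D' E0 Y).IsNClique s T → vu ∉ T →
      ∃ x ∈ T, cg χ x ≠ col := by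
  intro col T hT hu
  by_contra hcon
  push_neg at hcon
  obtain ⟨i, j, e, Q, hQcl, hcases⟩ := bg_loc D' E0 Y hs T hT.1 hu (le_of_eq hT.2.symm)
  rcases hcases with ⟨hTeq, hcardeq⟩ | ⟨hTeq, hcardeq, hsub⟩ | ⟨hTeq, hcardeq, hsub⟩
  · -- pure engine clique of size s
    have hQs : D'.IsNClique s Q := ⟨hQcl, by have := hT.2; omega⟩
    have hmono : ∀ v ∈ Q, cg χ (eng i j e v : VV s k) = col := by
      intro v hv
      exact hcon _ (hTeq ▸ Finset.mem_image.mpr ⟨v, hv, rfl⟩)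
    rcases fin2_eq_or e with he | he
    · obtain ⟨v, hv, hne⟩ := hχg col Q hQs
      apply hne
      have := hmono v hv
      rwa [show cg χ (eng i j e v : VV s k) = χ v by simp [cg, eng, he]] at this
    · obtain ⟨v, hv, hne⟩ := hχgf col Q hQs
      apply hne
      have := hmono v hv
      rwa [show cg χ (eng i j e v : VV s k) = flip2 (χ v) by simp [cg, eng, he]] at this
  · -- terminal va i
    have hvaT : (va i : VV s k) ∈ T := hTeq ▸ Finset.mem_insert_self _ _
    have hcol : col = 0 := by
      have := hcon _ hvaT
      rw [show cg χ (va i : VV s k) = 0 from rfl] at this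
      exact this.symm
    have hQs : D'.IsNClique (s-1) Q := ⟨hQcl, by have := hT.2; omega⟩
    have hmono : ∀ v ∈ Q, cg χ (eng i j e v : VV s k) = 0 := by
      intro v hv
      rw [← hcol]
      exact hcon _ (hTeq ▸ Finset.mem_insert.mpr (Or.inr (Finset.mem_image.mpr ⟨v, hv, rfl⟩)))
    rcases fin2_eq_or e with he | he
    · have hsubE : Q ⊆ E0 := by
        rw [he] at hsub
        rwa [show attA E0 Y 0 = E0 from if_pos rfl] at hsub
      obtain ⟨v, hv, hne⟩ := hA Q hsubE hQs
      apply hne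
      have := hmono v hv
      rwa [show cg χ (eng i j e v : VV s k) = χ v by simp [cg, eng, he]] at this
    · have hsubY : Q ⊆ Y := by
        rw [he] at hsub
        rwa [show attA E0 Y 1 = Y from if_neg (by decide)] at hsub
      obtain ⟨v, hv, hne⟩ := hY1 Q hsubY hQs
      apply hne
      have := hmono v hv
      rw [show cg χ (eng i j e v : VV s k) = flip2 (χ v) by simp [cg, eng, he]] at this
      rw [← flip2_flip2 (χ v), this]
      rfl
  · -- terminal vb j
    have hvbT : (vb j : VV s k) ∈ T := hTeq ▸ Finset.mem_insert_self _ _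
    have hcol : col = 1 := by
      have := hcon _ hvbT
      rw [show cg χ (vb j : VV s k) = 1 from rfl] at this
      exact this.symm
    have hQs : D'.IsNClique (s-1) Q := ⟨hQcl, by have := hT.2; omega⟩
    have hmono : ∀ v ∈ Q, cg χ (eng i j e v : VV s k) = 1 := by
      intro v hv
      rw [← hcol]
      exact hcon _ (hTeq ▸ Finset.mem_insert.mpr (Or.inr (Finset.mem_image.mpr ⟨v, hv, rfl⟩)))
    rcases fin2_eq_or e with he | he
    · have hsubY : Q ⊆ Y := by
        rw [he] at hsub
        rwa [show attB E0 Y 0 = Y from if_pos rfl] at hsub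
      obtain ⟨v, hv, hne⟩ := hY1 Q hsubY hQs
      apply hne
      have := hmono v hv
      rwa [show cg χ (eng i j e v : VV s k) = χ v by simp [cg, eng, he]] at this
    · have hsubE : Q ⊆ E0 := by
        rw [he] at hsub
        rwa [show attB E0 Y 1 = E0 from if_neg (by decide)] at hsub
      obtain ⟨v, hv, hne⟩ := hA Q hsubE hQs
      apply hne
      have := hmono v hv
      rw [show cg χ (eng i j e v : VV s k) = flip2 (χ v) by simp [cg, eng, he]] at this
      rw [← flip2_flip2 (χ v), this]
      rfl

lemma bg_not_arr (hs : 3 ≤ s) (χ : Fin k → Fin 2)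
    (hχg : GoodC s D' χ) (hχgf : GoodC s D' (fun v => flip2 (χ v)))
    (hA : ∀ Q, Q ⊆ E0 → D'.IsNClique (s-1) Q → ∃ v ∈ Q, χ v ≠ 0)
    (hY1 : ∀ Q, Q ⊆ Y → D'.IsNClique (s-1) Q → ∃ v ∈ Q, χ v ≠ 1)
    {S : Set (VV s k)} (hS : (vu : VV s k) ∉ S) :
    ¬ Arr s ((BG D' E0 Y).induce S) := by
  rw [not_arr_iff]
  refine ⟨fun x => cg χ x.val, ?_⟩
  intro col t ht
  have ht' : (BG D' E0 Y).IsNClique s (t.image Subtype.val) :=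
    isNClique_image _ Subtype.val_injective (fun _ _ hab => hab) ht
  have hu : (vu : VV s k) ∉ t.image Subtype.val := by
    intro h
    obtain ⟨x, _, hxv⟩ := Finset.mem_image.mp h
    exact hS (hxv ▸ x.2)
  obtain ⟨x, hx, hne⟩ := bg_good_coloring D' E0 Y hs χ hχg hχgf hA hY1 col _ ht' hu
  obtain ⟨y, hy, rfl⟩ := Finset.mem_image.mp hx
  exact ⟨y, hy, hne⟩

lemma bg_nbrs :
    ∀ x, (BG D' E0 Y).Adj vu x →
      x ∈ (Finset.univ.image (fun i : Fin (s-1) => (va i : VV s k)) ∪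
           Finset.univ.image (fun j : Fin (s-1) => (vb j : VV s k))) := by
  intro x hx
  rcases x with ⟨i₀,j₀,e₀,v₀⟩ | (i₀ | (j₀ | u₀))
  · exact absurd hx (fun h => h)
  · exact Finset.mem_union.mpr (Or.inl (Finset.mem_image.mpr ⟨i₀, Finset.mem_univ _, rfl⟩))
  · exact Finset.mem_union.mpr (Or.inr (Finset.mem_image.mpr ⟨j₀, Finset.mem_univ _, rfl⟩))
  · cases u₀; exact absurd hx (fun h => h)

lemma bg_nbrs_card (hs : 3 ≤ s) :
    ((Finset.univ.image (fun i : Fin (s-1) => (va i : VV s k))) ∪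
     (Finset.univ.image (fun j : Fin (s-1) => (vb j : VV s k)))).card ≤ 2*s-2 := by
  have h1 := Finset.card_union_le
    (Finset.univ.image (fun i : Fin (s-1) => (va i : VV s k)))
    (Finset.univ.image (fun j : Fin (s-1) => (vb j : VV s k)))
  have h2 := Finset.card_image_le (f := fun i : Fin (s-1) => (va i : VV s k))
      (s := Finset.univ)
  have h3 := Finset.card_image_le (f := fun j : Fin (s-1) => (vb j : VV s k))
      (s := Finset.univ)
  simp only [Finset.card_univ, Fintype.card_fin] at h2 h3
  omega

end BigGraph


/-- The main construction. -/
lemma build (s k : ℕ) (hs : 3 ≤ s) (G₀ : SimpleGraph (Fin k))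
    (hfree : G₀.CliqueFree (s+1)) (harr : Arr s G₀)
    (w : Fin k) (hw : ¬ Arr s (G₀.induce {x | x ≠ w})) :
    ∃ (m : ℕ) (G : SimpleGraph (Fin m)) (u : Fin m) (A : Finset (Fin m)),
      G.CliqueFree (s+1) ∧ Arr s G ∧ ¬ Arr s (G.induce {x | x ≠ u}) ∧
      (∀ x, G.Adj u x → x ∈ A) ∧ A.card ≤ 2*s-2 := by
  classical
  -- the engine graph: G₀ with all edges at w removed
  set D' : SimpleGraph (Fin k) :=
    { Adj := fun x y => G₀.Adj x y ∧ x ≠ w ∧ y ≠ w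
      symm := ⟨fun x y h => ⟨h.1.symm, h.2.2, h.2.1⟩⟩
      loopless := ⟨fun x h => G₀.irrefl h.1⟩ } with hD'def
  have hDfree : D'.CliqueFree (s+1) :=
    cliquefree_pull (s+1) id Function.injective_id (fun a b h => h.1) hfree
  -- D'-cliques avoid w
  have hwnot : ∀ (T : Finset (Fin k)) (n : ℕ), 2 ≤ n → D'.IsNClique n T → w ∉ T := by
    intro T n hn hT hwT
    have h1 : 1 ≤ (T.erase w).card := by
      rw [Finset.card_erase_of_mem hwT, hT.2]; omega
    obtain ⟨x, hx⟩ := Finset.card_pos.mp (by omega : 0 < (T.erase w).card)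
    have hxT := Finset.mem_of_mem_erase hx
    have hxw := Finset.ne_of_mem_erase hx
    have := hT.1 (Finset.mem_coe.mpr hwT) (Finset.mem_coe.mpr hxT) (Ne.symm hxw)
    exact this.2.1 rfl
  -- good colorings of D' exist
  have hgood_ex : ∃ c : Fin k → Fin 2, GoodC s D' c := by
    rw [not_arr_iff] at hw
    obtain ⟨cc, hcc⟩ := hw
    refine ⟨fun x => if h : x = w then 0 else cc ⟨x, h⟩, ?_⟩
    intro col T hT
    have hwT : w ∉ T := hwnot T s (by omega) hT
    have hTG : G₀.IsNClique s T := ⟨fun a ha b hb hne => (hT.1 ha hb hne).1, hT.2⟩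
    obtain ⟨t, ht, htmem⟩ := clique_subtype (S := {x | x ≠ w}) hTG
      (fun x hx hxw => hwT (by rw [hxw] at hx; exact hx))
    obtain ⟨y, hy, hne⟩ := hcc col t ht
    refine ⟨y.val, htmem y hy, ?_⟩
    show (if h : (y : Fin k) = w then (0 : Fin 2) else cc ⟨(y : Fin k), h⟩) ≠ col
    rw [dif_neg y.2]
    exact hne
  -- the neighborhood of w
  set NW : Finset (Fin k) := Finset.univ.filter (fun x => G₀.Adj w x) with hNW
  have hNWadj : ∀ x, x ∈ NW ↔ G₀.Adj w x := by
    intro x; rw [hNW, Finset.mem_filter]; simp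
  have hNWne : ∀ x ∈ NW, x ≠ w := by
    intro x hx h
    subst h
    exact G₀.irrefl ((hNWadj x).mp hx)
  have hNWfree : ∀ Q : Finset (Fin k), Q ⊆ NW → ¬ D'.IsNClique s Q := by
    intro Q hQ hQcl
    have hwQ : w ∉ Q := fun h => hNWne w (hQ h) rfl
    have hQG : G₀.IsNClique s Q := ⟨fun a ha b hb hne => (hQcl.1 ha hb hne).1, hQcl.2⟩
    have hins := hQG.insert (a := w) (fun b hb => (hNWadj b).mp (hQ hb))
    exact hfree _ hins
  have hNWfree1 : ∀ (z : Fin k) (Q : Finset (Fin k)), z ∈ NW → Q ⊆ NW → z ∉ Q →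
      (∀ b ∈ Q, D'.Adj z b) → ¬ D'.IsNClique (s-1) Q := by
    intro z Q hzNW hQ hzQ hadj hQcl
    have hQG : G₀.IsNClique (s-1) Q := ⟨fun a ha b hb hne => (hQcl.1 ha hb hne).1, hQcl.2⟩
    have hins := hQG.insert (a := z) (fun b hb => (hadj b hb).1)
    have hwz : w ∉ insert z Q := by
      intro hmem
      rcases Finset.mem_insert.mp hmem with h | h
      · exact hNWne z hzNW h.symm
      · exact hNWne w (hQ h) rfl
    have hins2 := hins.insert (a := w) (by
      intro b hb
      rcases Finset.mem_insert.mp hb with rfl | hb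
      · exact (hNWadj b).mp hzNW
      · exact (hNWadj b).mp (hQ hb))
    rw [show s - 1 + 1 = s by omega] at hins2
    exact hfree _ hins2
  -- the property P(M)
  have hPN : ∀ c : Fin k → Fin 2, GoodC s D' c → ∀ col : Fin 2,
      ∃ Q, Q ⊆ NW ∧ D'.IsNClique (s-1) Q ∧ ∀ v ∈ Q, c v = col := by
    intro c hc col
    obtain ⟨col', T, hT, hmono⟩ := harr (fun x => if x = w then col else c x)
    have hwT : w ∈ T := by
      by_contra hwT
      have hTD : D'.IsNClique s T := by
        refine ⟨?_, hT.2⟩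
        intro a ha b hb hne
        refine ⟨hT.1 ha hb hne, ?_, ?_⟩
        · intro h; rw [h] at ha; exact hwT (Finset.mem_coe.mp ha)
        · intro h; rw [h] at hb; exact hwT (Finset.mem_coe.mp hb)
      obtain ⟨v, hv, hne⟩ := hc col' T hTD
      apply hne
      have := hmono v hv
      rwa [if_neg (fun h => hwT (by rw [h] at hv; exact hv))] at this
    have hcol : col = col' := by
      have := hmono w hwT
      rwa [if_pos rfl] at this
    refine ⟨T.erase w, ?_, ⟨?_, ?_⟩, ?_⟩
    · intro x hx
      have hxT := Finset.mem_of_mem_erase hx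
      have hxw := Finset.ne_of_mem_erase hx
      exact (hNWadj x).mpr (hT.1 (Finset.mem_coe.mpr hwT) (Finset.mem_coe.mpr hxT)
        (Ne.symm hxw))
    · intro a ha b hb hne
      have haT := Finset.mem_of_mem_erase (Finset.mem_coe.mp ha)
      have hbT := Finset.mem_of_mem_erase (Finset.mem_coe.mp hb)
      exact ⟨hT.1 (Finset.mem_coe.mpr haT) (Finset.mem_coe.mpr hbT) hne,
        Finset.ne_of_mem_erase (Finset.mem_coe.mp ha),
        Finset.ne_of_mem_erase (Finset.mem_coe.mp hb)⟩
    · rw [Finset.card_erase_of_mem hwT, hT.2]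
    · intro x hx
      have hxw := Finset.ne_of_mem_erase hx
      have := hmono x (Finset.mem_of_mem_erase hx)
      rwa [if_neg hxw, ← hcol] at this
  -- minimal M
  obtain ⟨M, hMsub, hPM', hMmin⟩ := exists_minimal_finset
    (fun M => ∀ c : Fin k → Fin 2, GoodC s D' c → ∀ col : Fin 2,
      ∃ Q, Q ⊆ M ∧ D'.IsNClique (s-1) Q ∧ ∀ v ∈ Q, c v = col)
    NW.card NW le_rfl hPN
  -- pick z ∈ M
  obtain ⟨c₀, hc₀⟩ := hgood_ex
  obtain ⟨Q₀, hQ₀M, hQ₀cl, _⟩ := hPM' c₀ hc₀ 0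
  have hQ₀ne : Q₀.Nonempty := Finset.card_pos.mp (by rw [hQ₀cl.2]; omega)
  obtain ⟨z, hzQ₀⟩ := hQ₀ne
  have hzM : z ∈ M := hQ₀M hzQ₀
  -- the special coloring χ
  have hnot : ¬ (∀ c : Fin k → Fin 2, GoodC s D' c → ∀ col : Fin 2,
      ∃ Q, Q ⊆ M.erase z ∧ D'.IsNClique (s-1) Q ∧ ∀ v ∈ Q, c v = col) :=
    hMmin z hzM
  push_neg at hnot
  obtain ⟨c₁, hc₁good, col₁, hc₁⟩ := hnot
  obtain ⟨χ, hχgood, hA⟩ : ∃ χ : Fin k → Fin 2, GoodC s D' χ ∧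
      (∀ Q, Q ⊆ M.erase z → D'.IsNClique (s-1) Q → ∃ v ∈ Q, χ v ≠ 0) := by
    rcases fin2_eq_or col₁ with h0 | h1
    · refine ⟨c₁, hc₁good, ?_⟩
      intro Q hQ hQcl
      obtain ⟨v, hv, hne⟩ := hc₁ Q hQ hQcl
      exact ⟨v, hv, by rwa [h0] at hne⟩
    · refine ⟨fun v => flip2 (c₁ v), goodC_flip hc₁good, ?_⟩
      intro Q hQ hQcl
      obtain ⟨v, hv, hne⟩ := hc₁ Q hQ hQcl
      refine ⟨v, hv, ?_⟩
      intro hEq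
      apply hne
      have hEq' : flip2 (c₁ v) = 0 := hEq
      rw [h1, ← flip2_flip2 (c₁ v), hEq']
      rfl
  have hχz0 : χ z = 0 := by
    obtain ⟨Q, hQM, hQcl, hQmono⟩ := hPM' χ hχgood 0
    by_cases hzQ : z ∈ Q
    · exact hQmono z hzQ
    · obtain ⟨v, hv, hne⟩ := hA Q (Finset.subset_erase.mpr ⟨hQM, hzQ⟩) hQcl
      exact absurd (hQmono v hv) hne
  -- the set Y
  set Yz : Finset (Fin k) := insert z (M ∩ Finset.univ.filter (fun v => D'.Adj z v))
    with hYdef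
  have hYM : Yz ⊆ M := by
    intro x hx
    rcases Finset.mem_insert.mp hx with rfl | hx
    · exact hzM
    · exact (Finset.mem_inter.mp hx).1
  have hQYprop : ∀ Q : Finset (Fin k), Q ⊆ M → D'.IsClique ↑Q → z ∈ Q → Q ⊆ Yz := by
    intro Q hQM hQcl hz x hx
    by_cases hxz : x = z
    · rw [hYdef, hxz]; exact Finset.mem_insert_self _ _
    · rw [hYdef]
      apply Finset.mem_insert.mpr
      refine Or.inr (Finset.mem_inter.mpr ⟨hQM hx, ?_⟩)
      rw [Finset.mem_filter]
      exact ⟨Finset.mem_univ _, hQcl (Finset.mem_coe.mpr hz) (Finset.mem_coe.mpr hx)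
        (fun h => hxz h.symm)⟩
  have hY1 : ∀ Q, Q ⊆ Yz → D'.IsNClique (s-1) Q → ∃ v ∈ Q, χ v ≠ 1 := by
    intro Q hQY hQcl
    by_contra hcon
    push_neg at hcon
    by_cases hzQ : z ∈ Q
    · have := hcon z hzQ
      rw [hχz0] at this
      exact absurd this (by decide)
    · have hQsub : ∀ x ∈ Q, x ∈ M ∧ D'.Adj z x := by
        intro x hx
        have hxY := hQY hx
        rw [hYdef] at hxY
        rcases Finset.mem_insert.mp hxY with rfl | hxY
        · exact absurd hx hzQ
        · have h2 := Finset.mem_inter.mp hxY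
          exact ⟨h2.1, (Finset.mem_filter.mp h2.2).2⟩
      exact hNWfree1 z Q (hMsub hzM) (fun x hx => hMsub (hQsub x hx).1) hzQ
        (fun b hb => (hQsub b hb).2) hQcl
  have hMfree : ∀ Q, Q ⊆ M → ¬ D'.IsNClique s Q :=
    fun Q hQ => hNWfree Q (hQ.trans hMsub)
  have hE0prop : ∀ Q : Finset (Fin k), Q ⊆ M → z ∉ Q → Q ⊆ M.erase z :=
    fun Q h hz => Finset.subset_erase.mpr ⟨h, hz⟩
  have hχgf : GoodC s D' (fun v => flip2 (χ v)) := goodC_flip hχgood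
  -- instantiate the big graph
  have hbgfree : (BG (s := s) D' (M.erase z) Yz).CliqueFree (s+1) :=
    bg_cliquefree D' (M.erase z) Yz hs M (Finset.erase_subset _ _) hYM hDfree hMfree
  have hbgarr : Arr s (BG (s := s) D' (M.erase z) Yz) :=
    bg_arrows D' (M.erase z) Yz hs M z hPM' hE0prop hQYprop
  have hbgnot : ¬ Arr s ((BG (s := s) D' (M.erase z) Yz).induce {x | x ≠ vu}) :=
    bg_not_arr D' (M.erase z) Yz hs χ hχgood hχgf hA hY1 (fun h => h rfl)
  -- transport to Fin m
  set m := Fintype.card (VV s k) with hm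
  set e : VV s k ≃ Fin m := Fintype.equivFin (VV s k) with he
  set G : SimpleGraph (Fin m) := (BG (s := s) D' (M.erase z) Yz).comap e.symm with hG
  have hGadj : ∀ a b, G.Adj a b ↔ (BG (s := s) D' (M.erase z) Yz).Adj (e.symm a) (e.symm b) :=
    fun a b => Iff.rfl
  set u : Fin m := e vu with hu
  set A : Finset (Fin m) := (Finset.univ.image (fun i : Fin (s-1) => (va i : VV s k)) ∪
      Finset.univ.image (fun j : Fin (s-1) => (vb j : VV s k))).image e with hA'
  refine ⟨m, G, u, A, ?_, ?_, ?_, ?_, ?_⟩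
  · exact cliquefree_pull (s+1) (fun a => e.symm a) e.symm.injective
      (fun a b h => h) hbgfree
  · apply arr_push s (fun x => e x) e.injective
      (fun a b hab => by
        rw [hGadj]
        simpa using hab)
      hbgarr
  · intro harr2
    apply hbgnot
    refine arr_push (G := G.induce {x | x ≠ u}) s
      (fun x => (⟨e.symm x.1, ?_⟩ : {y : VV s k // y ∈ {x | x ≠ vu}})) ?_ ?_ harr2
    · intro hcontra
      apply x.2
      have h7 : (x.1 : Fin m) = e vu := by
        have h6 : e (e.symm (x.1 : Fin m)) = e vu := congrArg e hcontra
        simpa using h6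
      rw [← hu] at h7
      exact h7
    · intro a b hab
      simp only [Subtype.mk.injEq] at hab
      exact Subtype.ext (e.symm.injective hab)
    · intro a b hab
      exact hab
  · intro x hx
    rw [hGadj] at hx
    have hx' : (BG (s := s) D' (M.erase z) Yz).Adj vu (e.symm x) := by
      rwa [hu, Equiv.symm_apply_apply] at hx
    have hmem := bg_nbrs D' (M.erase z) Yz (e.symm x) hx'
    rw [hA']
    refine Finset.mem_image.mpr ⟨e.symm x, hmem, ?_⟩
    simp
  · rw [hA']
    exact le_trans Finset.card_image_le (bg_nbrs_card (s := s) (k := k) hs)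

end Stmt12

theorem stmt_12 (s k : ℕ) (hs : 3 ≤ s) (H : SimpleGraph (Fin k))
    (hHfree : H.CliqueFree (s + 1)) (hHarr : VArrows H ![s, s]) :
    ∃ (m : ℕ) (G : SimpleGraph (Fin m)),
      G.CliqueFree (s + 1) ∧
      G.minDegree = 2 * s - 2 ∧
      VArrows G ![s, s] ∧
      ∀ u : Fin m, ¬ VArrows (G.induce {v : Fin m | v ≠ u}) ![s, s] := by
  classical
  have harrH : Stmt12.Arr s H := (Stmt12.arr_iff s H).mpr hHarr
  obtain ⟨k₀, G₀, h0free, h0arr, h0crit⟩ := Stmt12.exists_critical s k H hHfree harrH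
  have hk₀ : Nonempty (Fin k₀) := by
    obtain ⟨col, T, hT, _⟩ := h0arr (fun _ => 0)
    have hTpos : 0 < T.card := by rw [hT.2]; omega
    obtain ⟨x, _⟩ := Finset.card_pos.mp hTpos
    exact ⟨x⟩
  obtain ⟨w⟩ := hk₀
  obtain ⟨m₁, G₁, u₁, A₁, h1free, h1arr, h1not, h1mem, h1card⟩ :=
    Stmt12.build s k₀ hs G₀ h0free h0arr w (h0crit w)
  obtain ⟨m, G, u, A, hfree, harr, hcrit, hmem, hcard⟩ :=
    Stmt12.exists_critical_u s (2*s-2) m₁ G₁ u₁ A₁ h1free h1arr h1not h1mem h1card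
  have hnem : Nonempty (Fin m) := ⟨u⟩
  have hlow : ∀ v : Fin m, 2*s-2 ≤ G.degree v := by
    intro v
    have h := hcrit v
    rw [Stmt12.not_arr_iff] at h
    obtain ⟨cc, hcc⟩ := h
    have key : ∀ i : Fin 2, ∃ Q : Finset (Fin m), Q ⊆ G.neighborFinset v ∧
        Q.card = s - 1 ∧ ∀ x ∈ Q, ∃ hx : x ≠ v, cc ⟨x, hx⟩ = i := by
      intro i
      obtain ⟨col, T, hT, hmono⟩ := harr (fun x => if hx : x = v then i else cc ⟨x, hx⟩)
      have hvT : v ∈ T := by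
        by_contra hvT
        obtain ⟨t, ht, htmem⟩ := Stmt12.clique_subtype (S := {x | x ≠ v}) hT
          (fun x hx hxv => hvT (by rw [hxv] at hx; exact hx))
        obtain ⟨y, hy, hne'⟩ := hcc col t ht
        apply hne'
        have h5 : (if hx : (y : Fin m) = v then i else cc ⟨(y : Fin m), hx⟩) = col :=
          hmono y.val (htmem y hy)
        rw [dif_neg y.2] at h5
        exact h5
      have hcol : i = col := by
        have h5 : (if hx : v = v then i else cc ⟨v, hx⟩) = col := hmono v hvT
        rwa [dif_pos rfl] at h5
      refine ⟨T.erase v, ?_, ?_, ?_⟩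
      · intro x hx
        exact (SimpleGraph.mem_neighborFinset G v x).mpr
          (hT.1 (Finset.mem_coe.mpr hvT)
            (Finset.mem_coe.mpr (Finset.mem_of_mem_erase hx))
            (Ne.symm (Finset.ne_of_mem_erase hx)))
      · rw [Finset.card_erase_of_mem hvT, hT.2]
      · intro x hx
        have hxv := Finset.ne_of_mem_erase hx
        refine ⟨hxv, ?_⟩
        have h5 : (if h : x = v then i else cc ⟨x, h⟩) = col :=
          hmono x (Finset.mem_of_mem_erase hx)
        rw [dif_neg hxv] at h5
        rw [h5, ← hcol]
    obtain ⟨Q₀, hQ₀sub, hQ₀card, hQ₀val⟩ := key 0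
    obtain ⟨Q₁, hQ₁sub, hQ₁card, hQ₁val⟩ := key 1
    have hdisj : Disjoint Q₀ Q₁ := by
      rw [Finset.disjoint_left]
      intro x hx₀ hx₁
      obtain ⟨hxv, h0⟩ := hQ₀val x hx₀
      obtain ⟨_, h1⟩ := hQ₁val x hx₁
      rw [h0] at h1
      exact absurd h1 (by decide)
    have hsub : Q₀ ∪ Q₁ ⊆ G.neighborFinset v := Finset.union_subset hQ₀sub hQ₁sub
    have hcard' := Finset.card_le_card hsub
    rw [Finset.card_union_of_disjoint hdisj, hQ₀card, hQ₁card] at hcard'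
    unfold SimpleGraph.degree
    omega
  have hdegu : G.degree u ≤ 2*s-2 := by
    have hsub : G.neighborFinset u ⊆ A := by
      intro x hx
      exact hmem x ((SimpleGraph.mem_neighborFinset G u x).mp hx)
    exact le_trans (Finset.card_le_card hsub) hcard
  refine ⟨m, G, hfree, ?_, (Stmt12.arr_iff s G).mp harr, ?_⟩
  · exact le_antisymm ((SimpleGraph.minDegree_le_degree G u).trans hdegu)
      (SimpleGraph.le_minDegree_of_forall_le_degree G _ hlow)
  · intro u'
    rw [← Stmt12.arr_iff]
    exact hcrit u'
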